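/- For every positive integer p and every real x, ∑_{n=1}^∞ (1^p + 2^p + ⋯ + n^p) x^n/n! = e^x · ∑_{k=1}^{p+1} S(p+1,k) x^k / k, where S denotes Stirling numbers of the second kind. -/

import Mathlib

open Finset Real

/-- Stirling numbers of the second kind. -/
def stirling2 : ℕ → ℕ → ℕ
  | 0, 0 => 1
  | 0, _ + 1 => 0
  | _ + 1, 0 => 0
  | p + 1, k + 1 => (k + 1) * stirling2 p (k + 1) + stirling2 p k

lemma stirling2_zero_right (p : ℕ) (hp : 0 < p) : stirling2 p 0 = 0 := by
  obtain ⟨q, rfl⟩ := Nat.exists_eq_succ_of_ne_zero hp.ne'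
  rfl

lemma stirling2_eq_zero : ∀ {p k : ℕ}, p < k → stirling2 p k = 0
  | 0, k + 1, _ => rfl
  | p + 1, k + 1, h => by
    have h1 : p < k + 1 := by omega
    have h2 : p < k := by omega
    show (k + 1) * stirling2 p (k + 1) + stirling2 p k = 0
    rw [stirling2_eq_zero h1, stirling2_eq_zero h2]
    simp

lemma mul_descFactorial (m k : ℕ) :
    m * m.descFactorial k = m.descFactorial (k + 1) + k * m.descFactorial k := by
  rcases le_or_gt k m with h | h
  · rw [Nat.descFactorial_succ, ← Nat.add_mul, Nat.sub_add_cancel h]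
  · rw [Nat.descFactorial_eq_zero_iff_lt.2 h,
      Nat.descFactorial_eq_zero_iff_lt.2 (by omega)]
    simp

/-- `m ^ p = ∑_k S(p,k) m^{(k)}`. -/
lemma pow_eq_sum_stirling2 (p : ℕ) : ∀ m : ℕ,
    m ^ p = ∑ k ∈ Finset.range (p + 1), stirling2 p k * m.descFactorial k := by
  induction p with
  | zero => intro m; simp [stirling2]
  | succ p ih =>
    intro m
    have : m ^ (p + 1) = m ^ p * m := by ring
    rw [this, ih m, Finset.sum_mul]
    have step : ∀ k, stirling2 p k * m.descFactorial k * m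
        = stirling2 p k * m.descFactorial (k + 1)
          + k * stirling2 p k * m.descFactorial k := by
      intro k
      rw [mul_comm _ m, mul_left_comm m, mul_descFactorial]
      ring
    rw [Finset.sum_congr rfl (fun k _ => step k), Finset.sum_add_distrib]
    -- RHS : ∑ k in range (p+2), stirling2 (p+1) k * m.descFactorial k
    rw [Finset.sum_range_succ' (fun k => stirling2 (p + 1) k * m.descFactorial k) (p + 1)]
    have h0 : stirling2 (p + 1) 0 * m.descFactorial 0 = 0 := by
      simp [stirling2_zero_right (p + 1) (Nat.succ_pos p)]
    rw [h0, add_zero]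
    have hrec : ∀ k, stirling2 (p + 1) (k + 1) * m.descFactorial (k + 1)
        = (k + 1) * stirling2 p (k + 1) * m.descFactorial (k + 1)
          + stirling2 p k * m.descFactorial (k + 1) := by
      intro k
      show ((k + 1) * stirling2 p (k + 1) + stirling2 p k) * m.descFactorial (k + 1) = _
      ring
    rw [Finset.sum_congr rfl (fun k _ => hrec k), Finset.sum_add_distrib]
    rw [add_comm (∑ k ∈ Finset.range (p + 1),
      (k + 1) * stirling2 p (k + 1) * m.descFactorial (k + 1))]
    congr 1
    -- ∑ k ∈ range (p+1), k * S(p,k) * m^{(k)} = ∑ k ∈ range (p+1), (k+1) S(p,k+1) m^{(k+1)}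
    rw [Finset.sum_range_succ (fun k => (k + 1) * stirling2 p (k + 1) * m.descFactorial (k + 1)) p,
      stirling2_eq_zero (Nat.lt_succ_self p)]
    simp only [Nat.mul_zero, Nat.zero_mul, mul_zero, zero_mul, add_zero]
    rw [Finset.sum_range_succ' (fun k => k * stirling2 p k * m.descFactorial k) p]
    simp

/-- `(N+1)^p = ∑_{j} S(p+1,j+1) N^{(j)}`. -/
lemma succ_pow_eq (p N : ℕ) :
    (N + 1) ^ p = ∑ j ∈ Finset.range (p + 1), stirling2 (p + 1) (j + 1) * N.descFactorial j := by
  apply Nat.eq_of_mul_eq_mul_left (Nat.succ_pos N)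
  have h1 : (N + 1) * (N + 1) ^ p = (N + 1) ^ (p + 1) := by ring
  rw [h1, pow_eq_sum_stirling2 (p + 1) (N + 1),
    Finset.sum_range_succ' (fun k => stirling2 (p + 1) k * (N + 1).descFactorial k) (p + 1)]
  have h0 : stirling2 (p + 1) 0 * (N + 1).descFactorial 0 = 0 := by
    simp [stirling2_zero_right (p + 1) (Nat.succ_pos p)]
  rw [h0, add_zero, Finset.mul_sum]
  refine Finset.sum_congr rfl fun j _ => ?_
  rw [Nat.succ_descFactorial_succ]
  simp only [Nat.succ_eq_add_one]
  ring

/-- Key finite identity in ℕ. -/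
lemma sum_pow_eq (p N : ℕ) :
    ∑ m ∈ Finset.Icc 1 N, m ^ p
      = ∑ j ∈ Finset.range (p + 1), stirling2 (p + 1) (j + 1) * j.factorial * N.choose (j + 1) := by
  induction N with
  | zero => simp
  | succ N ih =>
    rw [Finset.sum_Icc_succ_top (by omega : 1 ≤ N + 1), ih]
    have key : (N + 1) ^ p
        = ∑ j ∈ Finset.range (p + 1), stirling2 (p + 1) (j + 1) * j.factorial * N.choose j := by
      rw [succ_pow_eq p N]
      refine Finset.sum_congr rfl fun j _ => ?_
      rw [Nat.descFactorial_eq_factorial_mul_choose]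
      ring
    rw [key, ← Finset.sum_add_distrib]
    refine Finset.sum_congr rfl fun j _ => ?_
    rw [Nat.choose_succ_succ' N j]
    ring

lemma aux_term_eq (k j : ℕ) (x : ℝ) :
    ((j + (k + 1)).choose (k + 1) : ℝ) * x ^ (j + (k + 1)) / (j + (k + 1)).factorial
      = x ^ (k + 1) / (k + 1).factorial * (x ^ j / j.factorial) := by
  have h : ((j + (k + 1)).choose (k + 1) * (k + 1).factorial * j.factorial : ℕ)
      = (j + (k + 1)).factorial := by
    have := Nat.choose_mul_factorial_mul_factorial (Nat.le_add_left (k + 1) j)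
    simpa [Nat.add_sub_cancel] using this
  have h' : ((j + (k + 1)).choose (k + 1) : ℝ) * (k + 1).factorial * j.factorial
      = (j + (k + 1)).factorial := by exact_mod_cast h
  have h1 : ((j + (k + 1)).factorial : ℝ) ≠ 0 := Nat.cast_ne_zero.2 (Nat.factorial_ne_zero _)
  have h2 : ((k + 1).factorial : ℝ) ≠ 0 := Nat.cast_ne_zero.2 (Nat.factorial_ne_zero _)
  have h3 : (j.factorial : ℝ) ≠ 0 := Nat.cast_ne_zero.2 (Nat.factorial_ne_zero _)
  field_simp
  rw [pow_add]
  linear_combination x ^ j * x ^ (k + 1) * h'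

lemma choose_summable (k : ℕ) (x : ℝ) :
    Summable (fun m : ℕ => (m.choose (k + 1) : ℝ) * x ^ m / m.factorial) := by
  set f := fun m : ℕ => (m.choose (k + 1) : ℝ) * x ^ m / m.factorial with hf
  have hinj : Function.Injective (fun j : ℕ => j + (k + 1)) := fun a b hab => by
    simpa using hab
  have hvan : ∀ m ∉ Set.range (fun j : ℕ => j + (k + 1)), f m = 0 := by
    intro m hm
    have hlt : m < k + 1 := by
      by_contra hc
      exact hm ⟨m - (k + 1), by simp; omega⟩
    simp [hf, Nat.choose_eq_zero_of_lt hlt]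
  rw [← hinj.summable_iff hvan]
  have : (f ∘ fun j : ℕ => j + (k + 1))
      = fun j : ℕ => x ^ (k + 1) / (k + 1).factorial * (x ^ j / j.factorial) := by
    funext j
    exact aux_term_eq k j x
  rw [this]
  exact (Real.summable_pow_div_factorial x).mul_left _

lemma exp_tsum (x : ℝ) : Real.exp x = ∑' n : ℕ, x ^ n / n.factorial := by
  rw [Real.exp_eq_exp_ℝ, NormedSpace.exp_eq_tsum_div]

lemma key_tsum (k : ℕ) (x : ℝ) :
    ∑' n : ℕ, ((n + 1).choose (k + 1) : ℝ) * x ^ (n + 1) / (n + 1).factorial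
      = x ^ (k + 1) / (k + 1).factorial * Real.exp x := by
  set f := fun m : ℕ => (m.choose (k + 1) : ℝ) * x ^ m / m.factorial with hf
  have hsum : Summable f := choose_summable k x
  have h0 : f 0 = 0 := by simp [hf, Nat.choose_eq_zero_of_lt (Nat.succ_pos k)]
  have hshift : ∑' n : ℕ, f (n + 1) = ∑' m : ℕ, f m := by
    rw [Summable.tsum_eq_zero_add hsum, h0, zero_add]
  have hinj : Function.Injective (fun j : ℕ => j + (k + 1)) := fun a b hab => by
    simpa using hab
  have hvan : Function.support f ⊆ Set.range (fun j : ℕ => j + (k + 1)) := by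
    intro m hm
    by_contra hc
    have hlt : m < k + 1 := by
      by_contra hcc
      exact hc ⟨m - (k + 1), by simp; omega⟩
    exact hm (by simp [hf, Nat.choose_eq_zero_of_lt hlt])
  have hre : ∑' m : ℕ, f m = ∑' j : ℕ, f (j + (k + 1)) := (hinj.tsum_eq hvan).symm
  calc ∑' n : ℕ, f (n + 1) = ∑' j : ℕ, f (j + (k + 1)) := by rw [hshift, hre]
    _ = ∑' j : ℕ, x ^ (k + 1) / (k + 1).factorial * (x ^ j / j.factorial) :=
        tsum_congr fun j => aux_term_eq k j x
    _ = x ^ (k + 1) / (k + 1).factorial * ∑' j : ℕ, x ^ j / j.factorial := tsum_mul_left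
    _ = x ^ (k + 1) / (k + 1).factorial * Real.exp x := by rw [exp_tsum]

theorem stmt_6 (p : ℕ) (hp : 0 < p) (x : ℝ) :
    ∑' n : ℕ, (∑ k ∈ Finset.Icc 1 (n + 1), (k : ℝ) ^ p) * x ^ (n + 1) / (n + 1).factorial
      = Real.exp x * ∑ k ∈ Finset.Icc 1 (p + 1), (stirling2 (p + 1) k : ℝ) * x ^ k / k := by
  have hterm : ∀ n : ℕ,
      (∑ k ∈ Finset.Icc 1 (n + 1), (k : ℝ) ^ p) * x ^ (n + 1) / (n + 1).factorial
        = ∑ j ∈ Finset.range (p + 1), (stirling2 (p + 1) (j + 1) * j.factorial : ℝ) *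
            (((n + 1).choose (j + 1) : ℝ) * x ^ (n + 1) / (n + 1).factorial) := by
    intro n
    have hc : (∑ k ∈ Finset.Icc 1 (n + 1), (k : ℝ) ^ p)
        = ((∑ m ∈ Finset.Icc 1 (n + 1), m ^ p : ℕ) : ℝ) := by push_cast; rfl
    rw [hc, sum_pow_eq p (n + 1)]
    push_cast
    rw [Finset.sum_mul, Finset.sum_div]
    refine Finset.sum_congr rfl fun j _ => ?_
    ring
  rw [tsum_congr hterm]
  have hsumm : ∀ j ∈ Finset.range (p + 1),
      Summable (fun n : ℕ => (stirling2 (p + 1) (j + 1) * j.factorial : ℝ) *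
        (((n + 1).choose (j + 1) : ℝ) * x ^ (n + 1) / (n + 1).factorial)) := by
    intro j _
    have h2 : Summable (fun n : ℕ =>
        ((n + 1).choose (j + 1) : ℝ) * x ^ (n + 1) / (n + 1).factorial) :=
      (summable_nat_add_iff 1).2 (choose_summable j x)
    exact h2.mul_left _
  rw [Summable.tsum_finsetSum hsumm]
  have hvals : ∀ j ∈ Finset.range (p + 1),
      (∑' n : ℕ, (stirling2 (p + 1) (j + 1) * j.factorial : ℝ) *
        (((n + 1).choose (j + 1) : ℝ) * x ^ (n + 1) / (n + 1).factorial))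
        = (stirling2 (p + 1) (j + 1) * j.factorial : ℝ) *
            (x ^ (j + 1) / (j + 1).factorial * Real.exp x) := by
    intro j _
    rw [tsum_mul_left, key_tsum j x]
  rw [Finset.sum_congr rfl hvals]
  -- now the RHS
  rw [← Finset.Ico_add_one_right_eq_Icc, Finset.sum_Ico_eq_sum_range]
  have hlen : p + 1 + 1 - 1 = p + 1 := by omega
  rw [hlen, Finset.mul_sum]
  refine Finset.sum_congr rfl fun j _ => ?_
  have hfac : ((j + 1).factorial : ℝ) = (j + 1) * j.factorial := by
    exact_mod_cast Nat.factorial_succ j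
  rw [add_comm 1 j]
  have hj1 : (j.factorial : ℝ) ≠ 0 := Nat.cast_ne_zero.2 (Nat.factorial_ne_zero _)
  have hj2 : (j : ℝ) + 1 ≠ 0 := by positivity
  rw [hfac]
  push_cast
  field_simp
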